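/- For the core-halo ansatz with R₁ = P^{-2}, R₂ = P, R₃ = P², Φ = χ_{[0,P]}, L = χ_{[-1,a]} (a ∈ (−1,1) fixed), and α = α(P) > 0 chosen so that total energy is zero, the virial V(P) satisfies V(P) → −∞ as P → ∞. In particular, zero-energy data of this family have arbitrarily negative virial. -/

import Mathlib

open MeasureTheory Real Filter

set_option maxHeartbeats 2000000

/-! Auxiliary lemmas for integrals of indicator functions. -/

lemma chv_aeeq (c d : ℝ) (h0 : 0 ≤ c) :
    ((Set.Ioi (0:ℝ) ∩ Set.Icc c d : Set ℝ)) =ᶠ[ae volume] (Set.Ioc c d : Set ℝ) := by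
  rw [MeasureTheory.ae_eq_set]
  constructor
  · apply measure_mono_null (t := {c}) ?_ (measure_singleton c)
    intro x hx
    simp only [Set.mem_inter_iff, Set.mem_Ioi, Set.mem_Icc, Set.mem_diff, Set.mem_Ioc,
      Set.mem_singleton_iff] at *
    rcases hx with ⟨⟨hx0, hxc, hxd⟩, hn⟩
    by_contra hne
    exact hn ⟨lt_of_le_of_ne hxc (Ne.symm hne), hxd⟩
  · apply measure_mono_null (t := (∅ : Set ℝ)) ?_ (by simp)
    intro x hx
    simp only [Set.mem_diff, Set.mem_Ioc, Set.mem_inter_iff, Set.mem_Ioi, Set.mem_Icc] at hx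
    rcases hx with ⟨⟨hcx, hxd⟩, hn⟩
    exact absurd ⟨lt_of_le_of_lt h0 hcx, le_of_lt hcx, hxd⟩ hn

lemma chv_integrable (c d : ℝ) {f : ℝ → ℝ} (hf : Continuous f) :
    Integrable (Set.indicator (Set.Icc c d) f) :=
  (integrable_indicator_iff measurableSet_Icc).2 hf.integrableOn_Icc

lemma chv_int (c d : ℝ) (h0 : 0 ≤ c) (hcd : c ≤ d) (f : ℝ → ℝ) :
    ∫ r in Set.Ioi (0:ℝ), Set.indicator (Set.Icc c d) f r = ∫ r in c..d, f r := by
  calc ∫ r in Set.Ioi (0:ℝ), Set.indicator (Set.Icc c d) f r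
      = ∫ r in Set.Ioi (0:ℝ) ∩ Set.Icc c d, f r :=
        MeasureTheory.setIntegral_indicator measurableSet_Icc
    _ = ∫ r in Set.Ioc c d, f r := MeasureTheory.setIntegral_congr_set (chv_aeeq c d h0)
    _ = ∫ r in c..d, f r := (intervalIntegral.integral_of_le hcd).symm

lemma chv_inner_zero (c d u : ℝ) (hu : u < c) (f : ℝ → ℝ) :
    ∫ r in Set.Ioc (0:ℝ) u, Set.indicator (Set.Icc c d) f r = 0 := by
  rw [MeasureTheory.setIntegral_indicator measurableSet_Icc]
  have h : Set.Ioc (0:ℝ) u ∩ Set.Icc c d = ∅ := by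
    ext x
    simp only [Set.mem_inter_iff, Set.mem_Ioc, Set.mem_Icc, Set.mem_empty_iff_false, iff_false,
      not_and]
    intro h1 h2 h3
    linarith
  rw [h]
  simp

lemma chv_inner_sub (e u : ℝ) (h0 : 0 ≤ u) (hue : u ≤ e) (f : ℝ → ℝ) :
    ∫ r in Set.Ioc (0:ℝ) u, Set.indicator (Set.Icc 0 e) f r = ∫ r in (0:ℝ)..u, f r := by
  rw [MeasureTheory.setIntegral_indicator measurableSet_Icc]
  have h : Set.Ioc (0:ℝ) u ∩ Set.Icc 0 e = Set.Ioc 0 u := by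
    ext x
    simp only [Set.mem_inter_iff, Set.mem_Ioc, Set.mem_Icc]
    constructor
    · rintro ⟨h1, _⟩; exact h1
    · rintro ⟨h1, h2⟩; exact ⟨⟨h1, h2⟩, le_of_lt h1, le_trans h2 hue⟩
  rw [h, ← intervalIntegral.integral_of_le h0]

lemma chv_inner_core (e u : ℝ) (h0 : 0 ≤ e) (heu : e ≤ u) (f : ℝ → ℝ) :
    ∫ r in Set.Ioc (0:ℝ) u, Set.indicator (Set.Icc 0 e) f r = ∫ r in (0:ℝ)..e, f r := by
  rw [MeasureTheory.setIntegral_indicator measurableSet_Icc]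
  have h : Set.Ioc (0:ℝ) u ∩ Set.Icc 0 e = Set.Ioc 0 e := by
    ext x
    simp only [Set.mem_inter_iff, Set.mem_Ioc, Set.mem_Icc]
    constructor
    · rintro ⟨⟨h1, _⟩, ⟨_, h3⟩⟩; exact ⟨h1, h3⟩
    · rintro ⟨h1, h2⟩; exact ⟨⟨h1, le_trans h2 heu⟩, le_of_lt h1, h2⟩
  rw [h, ← intervalIntegral.integral_of_le h0]

lemma chv_inner_halo (c d u : ℝ) (hc : 0 < c) (hcu : c ≤ u) (hud : u ≤ d) (f : ℝ → ℝ) :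
    ∫ r in Set.Ioc (0:ℝ) u, Set.indicator (Set.Icc c d) f r = ∫ r in c..u, f r := by
  rw [MeasureTheory.setIntegral_indicator measurableSet_Icc]
  have h : Set.Ioc (0:ℝ) u ∩ Set.Icc c d = Set.Icc c u := by
    ext x
    simp only [Set.mem_inter_iff, Set.mem_Ioc, Set.mem_Icc]
    constructor
    · rintro ⟨⟨_, h2⟩, ⟨h3, _⟩⟩; exact ⟨h3, h2⟩
    · rintro ⟨h1, h2⟩; exact ⟨⟨lt_of_lt_of_le hc h1, h2⟩, h1, le_trans h2 hud⟩
  rw [h, MeasureTheory.integral_Icc_eq_integral_Ioc, ← intervalIntegral.integral_of_le hcu]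

lemma chv_poly (b c u v : ℝ) :
    ∫ x in u..v, (b * x + c * x ^ 4) = b * (v ^ 2 - u ^ 2) / 2 + c * (v ^ 5 - u ^ 5) / 5 := by
  rw [intervalIntegral.integral_add (f := fun x => b * x) (g := fun x => c * x ^ 4)
    ((((continuous_const (y := b)).mul (continuous_pow 1)).congr (fun x => by simp)).intervalIntegrable u v)
    ((continuous_const.mul (continuous_pow 4)).intervalIntegrable u v)]
  rw [intervalIntegral.integral_const_mul, intervalIntegral.integral_const_mul,
    integral_id, integral_pow]
  norm_num
  ring


lemma chv_alpha_lb (P e A K : ℝ) (hP : 16 ≤ P) (he0 : 0 < e) (he1 : e * P ^ 2 = 1)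
    (hαpos : 0 < A) (hKhi : K ≤ 1 + P) (hK0 : 0 < K)
    (hMpos : 0 < (e ^ 3 + A * (P ^ 6 - P ^ 3)) / 3)
    (hEq : e ^ 5 / 15 + A * (e ^ 3 * (P ^ 4 - P ^ 2) / 6)
      + A ^ 2 * ((P ^ 10 - P ^ 5) / 15 - (P ^ 7 - P ^ 5) / 6)
      = K * ((e ^ 3 + A * (P ^ 6 - P ^ 3)) / 3) ^ 2) :
    e ^ 6 ≤ A := by
  have hP0 : (0:ℝ) < P := by linarith
  have hP3c : (4096:ℝ) ≤ P ^ 3 := by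
    calc (4096:ℝ) = 16 ^ 3 := by norm_num
      _ ≤ P ^ 3 := pow_le_pow_left₀ (by norm_num) hP 3
  by_contra hcon
  push_neg at hcon
  have hn2 : (0:ℝ) ≤ (P ^ 10 - P ^ 5) / 15 - (P ^ 7 - P ^ 5) / 6 := by
    nlinarith [mul_le_mul_of_nonneg_right hP3c (pow_nonneg hP0.le 7),
      pow_nonneg hP0.le 5, pow_nonneg hP0.le 7]
  have hn1 : (0:ℝ) ≤ e ^ 3 * (P ^ 4 - P ^ 2) / 6 := by
    have h : (0:ℝ) ≤ P ^ 4 - P ^ 2 := by nlinarith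
    positivity
  have hNval : e ^ 5 / 15 ≤ K * ((e ^ 3 + A * (P ^ 6 - P ^ 3)) / 3) ^ 2 := by
    have h1 : 0 ≤ A * (e ^ 3 * (P ^ 4 - P ^ 2) / 6) := mul_nonneg hαpos.le hn1
    have h2 : 0 ≤ A ^ 2 * ((P ^ 10 - P ^ 5) / 15 - (P ^ 7 - P ^ 5) / 6) :=
      mul_nonneg (sq_nonneg A) hn2
    linarith
  have hMle : (e ^ 3 + A * (P ^ 6 - P ^ 3)) / 3 ≤ 2 * e ^ 3 / 3 := by
    have h1 : A * (P ^ 6 - P ^ 3) ≤ e ^ 6 * P ^ 6 := by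
      nlinarith [mul_le_mul_of_nonneg_right hcon.le (pow_nonneg hP0.le 6),
        mul_nonneg hαpos.le (pow_nonneg hP0.le 3)]
    have h2 : e ^ 6 * P ^ 6 = e ^ 3 := by
      have h3 : (e * P ^ 2) ^ 3 = 1 := by rw [he1]; norm_num
      calc e ^ 6 * P ^ 6 = e ^ 3 * (e * P ^ 2) ^ 3 := by ring
        _ = e ^ 3 := by rw [h3]; ring
    linarith
  have hKM : K * ((e ^ 3 + A * (P ^ 6 - P ^ 3)) / 3) ^ 2
      ≤ (1 + P) * (2 * e ^ 3 / 3) ^ 2 := by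
    calc K * ((e ^ 3 + A * (P ^ 6 - P ^ 3)) / 3) ^ 2
        ≤ K * (2 * e ^ 3 / 3) ^ 2 :=
          mul_le_mul_of_nonneg_left (pow_le_pow_left₀ hMpos.le hMle 2) hK0.le
      _ ≤ (1 + P) * (2 * e ^ 3 / 3) ^ 2 :=
          mul_le_mul_of_nonneg_right hKhi (by positivity)
  have h5 : e ^ 5 * P ^ 10 = 1 := by
    have h3 : (e * P ^ 2) ^ 5 = 1 := by rw [he1]; norm_num
    calc e ^ 5 * P ^ 10 = (e * P ^ 2) ^ 5 := by ring
      _ = 1 := h3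
  have hfin : e ^ 5 / 15 ≤ (1 + P) * (2 * e ^ 3 / 3) ^ 2 := le_trans hNval hKM
  have hmul := mul_le_mul_of_nonneg_right hfin (le_of_lt (pow_pos hP0 10))
  have hRHS : (1 + P) * (2 * e ^ 3 / 3) ^ 2 * P ^ 10 = 4 / 9 * ((1 + P) * e) := by
    calc (1 + P) * (2 * e ^ 3 / 3) ^ 2 * P ^ 10
        = 4 / 9 * ((1 + P) * e) * (e ^ 5 * P ^ 10) := by ring
      _ = 4 / 9 * ((1 + P) * e) := by rw [h5]; ring
  have hLHS : e ^ 5 / 15 * P ^ 10 = 1 / 15 := by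
    calc e ^ 5 / 15 * P ^ 10 = (e ^ 5 * P ^ 10) / 15 := by ring
      _ = 1 / 15 := by rw [h5]
  have h2' : (1 + P) * e ≤ 1 / 8 := by
    nlinarith [he1, he0, hP,
      mul_nonneg he0.le (show (0:ℝ) ≤ P ^ 2 - 8 * P - 8 by nlinarith [hP, sq_nonneg (P - 16)])]
  rw [hLHS, hRHS] at hmul
  linarith

lemma chv_ratio_lb (P e A : ℝ) (hP : 16 ≤ P) (he0 : 0 < e) (he1 : e * P ^ 2 = 1)
    (hαpos : 0 < A) (hαe6 : e ^ 6 ≤ A)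
    (hMpos : 0 < (e ^ 3 + A * (P ^ 6 - P ^ 3)) / 3) :
    P ^ 2 / 8 ≤ ((e ^ 4 + A * (P ^ 8 - P ^ 4)) / 4) / ((e ^ 3 + A * (P ^ 6 - P ^ 3)) / 3) := by
  have hP0 : (0:ℝ) < P := by linarith
  rw [le_div_iff₀ hMpos]
  have haux2 : e ^ 3 * P ^ 2 = e ^ 2 := by
    calc e ^ 3 * P ^ 2 = e ^ 2 * (e * P ^ 2) := by ring
      _ = e ^ 2 := by rw [he1]; ring
  have haux1 : e ^ 6 * P ^ 8 = e ^ 2 := by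
    have h4 : (e * P ^ 2) ^ 4 = 1 := by rw [he1]; norm_num
    calc e ^ 6 * P ^ 8 = e ^ 2 * (e * P ^ 2) ^ 4 := by ring
      _ = e ^ 2 := by rw [h4]; ring
  have haux3 : e ^ 2 ≤ A * P ^ 8 := by
    rw [← haux1]
    exact mul_le_mul_of_nonneg_right hαe6 (by positivity)
  nlinarith [haux2, haux3, hαpos, he0, hP, pow_pos he0 4,
    mul_nonneg hαpos.le (pow_nonneg hP0.le 5),
    mul_nonneg hαpos.le (show (0:ℝ) ≤ 4 * P ^ 8 - 6 * P ^ 4 by nlinarith [hP, pow_pos hP0 4, mul_le_mul_of_nonneg_right (show (4:ℝ) ≤ P ^ 4 by nlinarith [hP, sq_nonneg (P - 16), sq_nonneg (P ^ 2 - 2)]) (pow_nonneg hP0.le 4)])]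

/-- The kinetic energy as an explicit function of `P`. -/
noncomputable def chvK (P : ℝ) : ℝ :=
  (∫ s in (0:ℝ)..P, s ^ 2 * Real.sqrt (1 + s ^ 2)) / (P ^ 3 / 3)

noncomputable def chvA (P : ℝ) : ℝ :=
  (P ^ 10 - P ^ 5) / 15 - (P ^ 7 - P ^ 5) / 6 - chvK P * (P ^ 6 - P ^ 3) ^ 2 / 9

noncomputable def chvB (P : ℝ) : ℝ :=
  ((P ^ 2)⁻¹) ^ 3 * (P ^ 4 - P ^ 2) / 6 - 2 * chvK P * ((P ^ 2)⁻¹) ^ 3 * (P ^ 6 - P ^ 3) / 9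

noncomputable def chvC (P : ℝ) : ℝ :=
  ((P ^ 2)⁻¹) ^ 5 / 15 - chvK P * ((P ^ 2)⁻¹) ^ 6 / 9

/-- The halo amplitude chosen to make the total energy vanish. -/
noncomputable def chvAlpha (P : ℝ) : ℝ :=
  (-chvB P - Real.sqrt ((chvB P) ^ 2 - 4 * chvA P * chvC P)) / (2 * chvA P)

theorem core_halo_virial_unbounded_below
    (a : ℝ) (ha : a ∈ Set.Ioo (-1 : ℝ) 1)
    (η : ℝ → ℝ → ℝ → ℝ)
    (hη : ∀ P α r, η P α r = Set.indicator (Set.Icc 0 (P ^ (-2 : ℤ))) 1 r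
        + α * Set.indicator (Set.Icc P (P ^ 2)) 1 r)
    (KE : ℝ → ℝ)
    (hKE : ∀ P, KE P = (∫ s in (0:ℝ)..P, s ^ 2 * Real.sqrt (1 + s ^ 2)) /
        (∫ s in (0:ℝ)..P, s ^ 2))
    (PE : ℝ → ℝ → ℝ)
    (hPE : ∀ P α, PE P α =
      -((4 * π / (4 * π * ∫ r in Set.Ioi (0:ℝ), η P α r * r ^ 2)) ^ 2) *
        ∫ r in Set.Ioi (0:ℝ), η P α r * r * (∫ r' in Set.Ioc (0:ℝ) r, η P α r' * r' ^ 2))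
    (V : ℝ → ℝ → ℝ)
    (hV : ∀ P α, V P α =
      ((∫ r in Set.Ioi (0:ℝ), η P α r * r ^ 3) / (∫ r in Set.Ioi (0:ℝ), η P α r * r ^ 2)) *
        (3 * P / 4) * ((a - 1) / 2)) :
    ∃ α : ℝ → ℝ,
      (∀ᶠ P in atTop, 0 < α P ∧ KE P + PE P (α P) = 0) ∧
      Tendsto (fun P => V P (α P)) atTop atBot := by
  have hmain : ∀ᶠ P in atTop, 0 < chvAlpha P ∧ KE P + PE P (chvAlpha P) = 0 ∧
      V P (chvAlpha P) ≤ 3 * (a - 1) / 64 * P ^ 3 := by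
    filter_upwards [eventually_ge_atTop (16:ℝ)] with P hP
    have hP0 : (0:ℝ) < P := by linarith
    obtain ⟨A, hA_def⟩ : ∃ A, A = chvAlpha P := ⟨_, rfl⟩
    rw [← hA_def]
    set e : ℝ := (P ^ 2)⁻¹ with he_def
    have hzp : P ^ (-2:ℤ) = e := by rw [he_def, zpow_neg]; norm_cast
    have he0 : (0:ℝ) < e := by rw [he_def]; positivity
    have he1 : e * P ^ 2 = 1 := by rw [he_def]; field_simp
    have heP : e < P := by nlinarith
    have he_le : e ≤ 1 := by nlinarith
    have hP3c : (4096:ℝ) ≤ P ^ 3 := by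
      calc (4096:ℝ) = 16 ^ 3 := by norm_num
        _ ≤ P ^ 3 := pow_le_pow_left₀ (by norm_num) hP 3
    -- kinetic energy value and bounds
    have hKval : KE P = chvK P := by
      rw [hKE, chvK, integral_pow]
      norm_num
    have hIlo : P ^ 4 / 4 ≤ ∫ s in (0:ℝ)..P, s ^ 2 * Real.sqrt (1 + s ^ 2) := by
      have h1 : ∫ s in (0:ℝ)..P, s ^ 3 = P ^ 4 / 4 := by rw [integral_pow]; norm_num
      rw [← h1]
      apply intervalIntegral.integral_mono_on hP0.le
        ((continuous_pow 3).intervalIntegrable 0 P)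
        (((continuous_pow 2).mul
          (Real.continuous_sqrt.comp (continuous_const.add (continuous_pow 2)))).intervalIntegrable 0 P)
      intro x hx
      have hx0 : 0 ≤ x := hx.1
      have hs : x ≤ Real.sqrt (1 + x ^ 2) := by
        have h := Real.sqrt_le_sqrt (show x ^ 2 ≤ 1 + x ^ 2 by linarith)
        rwa [Real.sqrt_sq hx0] at h
      calc x ^ 3 = x ^ 2 * x := by ring
        _ ≤ x ^ 2 * Real.sqrt (1 + x ^ 2) := by
            exact mul_le_mul_of_nonneg_left hs (sq_nonneg x)
    have hIhi : (∫ s in (0:ℝ)..P, s ^ 2 * Real.sqrt (1 + s ^ 2)) ≤ P ^ 3 / 3 + P ^ 4 / 4 := by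
      have h1 : ∫ s in (0:ℝ)..P, (s ^ 2 + s ^ 3) = P ^ 3 / 3 + P ^ 4 / 4 := by
        rw [intervalIntegral.integral_add ((continuous_pow 2).intervalIntegrable 0 P)
          ((continuous_pow 3).intervalIntegrable 0 P), integral_pow, integral_pow]
        norm_num
      rw [← h1]
      apply intervalIntegral.integral_mono_on hP0.le
        (((continuous_pow 2).mul
          (Real.continuous_sqrt.comp (continuous_const.add (continuous_pow 2)))).intervalIntegrable 0 P)
        (((continuous_pow 2).add (continuous_pow 3)).intervalIntegrable 0 P)
      intro x hx
      have hx0 : 0 ≤ x := hx.1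
      have hs : Real.sqrt (1 + x ^ 2) ≤ 1 + x := by
        have h := Real.sqrt_le_sqrt (show 1 + x ^ 2 ≤ (1 + x) ^ 2 by nlinarith)
        rwa [Real.sqrt_sq (by linarith)] at h
      calc x ^ 2 * Real.sqrt (1 + x ^ 2) ≤ x ^ 2 * (1 + x) :=
            mul_le_mul_of_nonneg_left hs (sq_nonneg x)
        _ = x ^ 2 + x ^ 3 := by ring
    have hP3 : (0:ℝ) < P ^ 3 / 3 := by positivity
    have hKlo : 3 * P / 4 ≤ chvK P := by
      rw [chvK, le_div_iff₀ hP3]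
      nlinarith [hIlo]
    have hKhi : chvK P ≤ 1 + P := by
      rw [chvK, div_le_iff₀ hP3]
      nlinarith [hIhi]
    have hK0 : 0 < chvK P := lt_of_lt_of_le (by linarith) hKlo
    -- pointwise expansion of η against a power weight
    have hEta2 : ∀ r : ℝ, η P A r * r ^ 2 =
        Set.indicator (Set.Icc 0 e) (fun x => x ^ 2) r
          + A * Set.indicator (Set.Icc P (P ^ 2)) (fun x => x ^ 2) r := by
      intro r
      rw [hη, hzp]
      by_cases h1 : r ∈ Set.Icc 0 e <;> by_cases h2 : r ∈ Set.Icc P (P ^ 2) <;>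
        simp [h1, h2] <;> ring
    have hEta3 : ∀ r : ℝ, η P A r * r ^ 3 =
        Set.indicator (Set.Icc 0 e) (fun x => x ^ 3) r
          + A * Set.indicator (Set.Icc P (P ^ 2)) (fun x => x ^ 3) r := by
      intro r
      rw [hη, hzp]
      by_cases h1 : r ∈ Set.Icc 0 e <;> by_cases h2 : r ∈ Set.Icc P (P ^ 2) <;>
        simp [h1, h2] <;> ring
    have hPP2 : P ≤ P ^ 2 := by nlinarith
    -- the three basic integrals
    have hJ2 : ∫ r in Set.Ioi (0:ℝ), η P A r * r ^ 2 = (e ^ 3 + A * (P ^ 6 - P ^ 3)) / 3 := by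
      simp only [hEta2]
      rw [MeasureTheory.integral_add ((chv_integrable 0 e (continuous_pow 2)).restrict)
        (((chv_integrable P (P ^ 2) (continuous_pow 2)).restrict).const_mul A),
        MeasureTheory.integral_const_mul,
        chv_int 0 e le_rfl he0.le, chv_int P (P ^ 2) hP0.le hPP2,
        integral_pow, integral_pow]
      ring
    have hJ3 : ∫ r in Set.Ioi (0:ℝ), η P A r * r ^ 3 = (e ^ 4 + A * (P ^ 8 - P ^ 4)) / 4 := by
      simp only [hEta3]
      rw [MeasureTheory.integral_add ((chv_integrable 0 e (continuous_pow 3)).restrict)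
        (((chv_integrable P (P ^ 2) (continuous_pow 3)).restrict).const_mul A),
        MeasureTheory.integral_const_mul,
        chv_int 0 e le_rfl he0.le, chv_int P (P ^ 2) hP0.le hPP2,
        integral_pow, integral_pow]
      ring
    -- pointwise evaluation of the potential-energy integrand
    have hbig : ∀ r : ℝ, η P A r * r * (∫ r' in Set.Ioc (0:ℝ) r, η P A r' * r' ^ 2) =
        Set.indicator (Set.Icc 0 e) (fun x => (1/3 : ℝ) * x ^ 4) r
          + A * Set.indicator (Set.Icc P (P ^ 2))
              (fun x => ((e ^ 3 - A * P ^ 3) / 3) * x + (A / 3) * x ^ 4) r := by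
      intro r
      by_cases h1 : r ∈ Set.Icc 0 e <;> by_cases h2 : r ∈ Set.Icc P (P ^ 2)
      · exact absurd h2.1 (by nlinarith [h1.2])
      · have hF : (∫ r' in Set.Ioc (0:ℝ) r, η P A r' * r' ^ 2) = r ^ 3 / 3 := by
          simp only [hEta2]
          rw [MeasureTheory.integral_add ((chv_integrable 0 e (continuous_pow 2)).restrict)
            (((chv_integrable P (P ^ 2) (continuous_pow 2)).restrict).const_mul A),
            MeasureTheory.integral_const_mul,
            chv_inner_sub e r h1.1 h1.2,
            chv_inner_zero P (P ^ 2) r (lt_of_le_of_lt h1.2 heP),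
            integral_pow]
          ring
        rw [hF, hη, hzp, Set.indicator_of_mem h1, Set.indicator_of_notMem h2,
          Set.indicator_of_mem h1, Set.indicator_of_notMem h2]
        simp
        ring
      · have hF : (∫ r' in Set.Ioc (0:ℝ) r, η P A r' * r' ^ 2)
            = e ^ 3 / 3 + A * ((r ^ 3 - P ^ 3) / 3) := by
          simp only [hEta2]
          rw [MeasureTheory.integral_add ((chv_integrable 0 e (continuous_pow 2)).restrict)
            (((chv_integrable P (P ^ 2) (continuous_pow 2)).restrict).const_mul A),
            MeasureTheory.integral_const_mul,
            chv_inner_core e r he0.le (le_trans heP.le h2.1),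
            chv_inner_halo P (P ^ 2) r hP0 h2.1 h2.2,
            integral_pow, integral_pow]
          ring
        rw [hF, hη, hzp, Set.indicator_of_notMem h1, Set.indicator_of_mem h2,
          Set.indicator_of_notMem h1, Set.indicator_of_mem h2]
        simp
        ring
      · rw [hη, hzp, Set.indicator_of_notMem h1, Set.indicator_of_notMem h2,
          Set.indicator_of_notMem h1, Set.indicator_of_notMem h2]
        simp
    -- value of the potential-energy integral
    have hN : ∫ r in Set.Ioi (0:ℝ), η P A r * r * (∫ r' in Set.Ioc (0:ℝ) r, η P A r' * r' ^ 2)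
        = e ^ 5 / 15 + A * (e ^ 3 * (P ^ 4 - P ^ 2) / 6)
          + A ^ 2 * ((P ^ 10 - P ^ 5) / 15 - (P ^ 7 - P ^ 5) / 6) := by
      simp only [hbig]
      have hc1 : Continuous fun x : ℝ => (1/3 : ℝ) * x ^ 4 :=
        continuous_const.mul (continuous_pow 4)
      have hc2 : Continuous fun x : ℝ => ((e ^ 3 - A * P ^ 3) / 3) * x + (A / 3) * x ^ 4 :=
        (continuous_const.mul continuous_id').add
          (continuous_const.mul (continuous_pow 4))
      rw [MeasureTheory.integral_add ((chv_integrable 0 e hc1).restrict)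
        (((chv_integrable P (P ^ 2) hc2).restrict).const_mul A),
        MeasureTheory.integral_const_mul,
        chv_int 0 e le_rfl he0.le, chv_int P (P ^ 2) hP0.le hPP2,
        chv_poly]
      have h1 : ∫ x in (0:ℝ)..e, (1/3 : ℝ) * x ^ 4 = e ^ 5 / 15 := by
        rw [intervalIntegral.integral_const_mul, integral_pow]
        norm_num
        ring
      rw [h1]
      ring
    -- the quadratic relation
    have hquad : (∫ r in Set.Ioi (0:ℝ), η P A r * r *
          (∫ r' in Set.Ioc (0:ℝ) r, η P A r' * r' ^ 2))
        - chvK P * ((∫ r in Set.Ioi (0:ℝ), η P A r * r ^ 2)) ^ 2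
        = chvA P * A ^ 2 + chvB P * A + chvC P := by
      rw [hN, hJ2, chvA, chvB, chvC, ← he_def]
      ring
    -- sign facts for the quadratic coefficients
    have hAneg : chvA P < 0 := by
      rw [chvA]
      have h1 : 3 * P / 4 * (P ^ 6 - P ^ 3) ^ 2 ≤ chvK P * (P ^ 6 - P ^ 3) ^ 2 :=
        mul_le_mul_of_nonneg_right hKlo (sq_nonneg _)
      have h75 : P ^ 5 ≤ P ^ 7 := pow_le_pow_right₀ (by linarith) (by norm_num)
      nlinarith [h1, hP3c, h75, pow_nonneg hP0.le 10, pow_nonneg hP0.le 7, pow_nonneg hP0.le 5,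
        mul_le_mul_of_nonneg_right hP3c (pow_nonneg hP0.le 10)]
    have hCpos : 0 < chvC P := by
      rw [chvC, ← he_def]
      have h2 : (1 + P) * e ≤ 1 / 8 := by
        nlinarith [he1, he0, hP, mul_nonneg he0.le (show (0:ℝ) ≤ P ^ 2 - 8 * P - 8 by nlinarith [hP, sq_nonneg (P - 16)])]
      have h1 : chvK P * e ≤ 1 / 8 :=
        le_trans (mul_le_mul_of_nonneg_right hKhi he0.le) h2
      have h3 : chvK P * e * e ^ 5 ≤ 1 / 8 * e ^ 5 :=
        mul_le_mul_of_nonneg_right h1 (by positivity)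
      have h4 : chvK P * e ^ 6 = chvK P * e * e ^ 5 := by ring
      linarith [pow_pos he0 5]
    have hdisc : 0 < chvB P ^ 2 - 4 * chvA P * chvC P := by
      nlinarith [sq_nonneg (chvB P), mul_pos (neg_pos.2 hAneg) hCpos]
    obtain ⟨s, hs_def⟩ : ∃ s, s = Real.sqrt (chvB P ^ 2 - 4 * chvA P * chvC P) := ⟨_, rfl⟩
    have hs_sq : s ^ 2 = chvB P ^ 2 - 4 * chvA P * chvC P := by
      rw [hs_def]; exact Real.sq_sqrt hdisc.le
    have hs_gt : |chvB P| < s := by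
      rw [hs_def, ← Real.sqrt_sq_eq_abs]
      exact Real.sqrt_lt_sqrt (sq_nonneg _) (by nlinarith [mul_pos (neg_pos.2 hAneg) hCpos])
    have hαpos : 0 < A := by
      rw [hA_def, chvAlpha, ← hs_def]
      apply div_pos_of_neg_of_neg
      · have := abs_nonneg (chvB P)
        have := neg_abs_le (chvB P)
        linarith
      · linarith
    -- A is a root of the quadratic
    have hα2 : 2 * chvA P * A = -chvB P - s := by
      have h2A : 2 * chvA P ≠ 0 := ne_of_lt (by linarith)
      have hA0 : chvA P ≠ 0 := ne_of_lt hAneg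
      rw [hA_def, chvAlpha, ← hs_def]
      field_simp
    have hroot : chvA P * A ^ 2 + chvB P * A + chvC P = 0 := by
      have hu : (2 * chvA P * A) ^ 2 = (-chvB P - s) ^ 2 := by rw [hα2]
      have h4 : 4 * chvA P * (chvA P * A ^ 2 + chvB P * A + chvC P) = 0 := by
        linear_combination hu + 2 * chvB P * hα2 + hs_sq
      rcases mul_eq_zero.mp h4 with h | h
      · exact absurd h (by intro hh; nlinarith)
      · exact h
    -- the mass integral is positive
    have hm1pos : (0:ℝ) < P ^ 6 - P ^ 3 := by
      nlinarith [mul_pos (pow_pos hP0 3) (show (0:ℝ) < P ^ 3 - 1 by linarith)]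
    have hM : (0:ℝ) < (e ^ 3 + A * (P ^ 6 - P ^ 3)) / 3 := by
      have h1 := mul_pos hαpos hm1pos
      have h2 := pow_pos he0 3
      linarith
    -- the zero-energy identity N = K * M ^ 2
    have hNK : (∫ r in Set.Ioi (0:ℝ), η P A r * r * (∫ r' in Set.Ioc (0:ℝ) r, η P A r' * r' ^ 2))
        = chvK P * ((∫ r in Set.Ioi (0:ℝ), η P A r * r ^ 2)) ^ 2 := by
      have h := hquad
      rw [hroot] at h
      linarith
    -- total energy vanishes
    have hEzero : KE P + PE P A = 0 := by
      rw [hKval, hPE, hNK, hJ2]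
      have hMne : ((e ^ 3 + A * (P ^ 6 - P ^ 3)) / 3) ≠ 0 := ne_of_gt hM
      have hpi : (π:ℝ) ≠ 0 := Real.pi_ne_zero
      field_simp
      rw [div_self (by intro h; apply hMne; linear_combination h / 3)]
      ring
    -- lower bound on the halo amplitude
    have hαe6 : e ^ 6 ≤ A := by
      apply chv_alpha_lb P e A (chvK P) hP he0 he1 hαpos hKhi hK0 hM
      have h := hNK
      rw [hN, hJ2] at h
      exact h
    -- lower bound on the virial ratio
    have hratio : P ^ 2 / 8 ≤ ((e ^ 4 + A * (P ^ 8 - P ^ 4)) / 4)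
        / ((e ^ 3 + A * (P ^ 6 - P ^ 3)) / 3) :=
      chv_ratio_lb P e A hP he0 he1 hαpos hαe6 hM
    -- virial bound
    have hVle : V P A ≤ 3 * (a - 1) / 64 * P ^ 3 := by
      rw [hV, hJ2, hJ3]
      have hc : (a - 1) / 2 ≤ 0 := by linarith [ha.2]
      have h1 : P ^ 2 / 8 * (3 * P / 4) ≤ (((e ^ 4 + A * (P ^ 8 - P ^ 4)) / 4)
          / ((e ^ 3 + A * (P ^ 6 - P ^ 3)) / 3)) * (3 * P / 4) :=
        mul_le_mul_of_nonneg_right hratio (by positivity)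
      calc (((e ^ 4 + A * (P ^ 8 - P ^ 4)) / 4) / ((e ^ 3 + A * (P ^ 6 - P ^ 3)) / 3))
            * (3 * P / 4) * ((a - 1) / 2)
          ≤ P ^ 2 / 8 * (3 * P / 4) * ((a - 1) / 2) := mul_le_mul_of_nonpos_right h1 hc
        _ = 3 * (a - 1) / 64 * P ^ 3 := by ring
    exact ⟨hαpos, hEzero, hVle⟩
  refine ⟨chvAlpha, hmain.mono fun P h => ⟨h.1, h.2.1⟩, ?_⟩
  apply tendsto_atBot_mono' atTop (hmain.mono fun P h => h.2.2)
  have h1 := tendsto_pow_atTop (α := ℝ) (n := 3) (by norm_num)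
  exact h1.const_mul_atTop_of_neg (by nlinarith [ha.2] : 3 * (a - 1) / 64 < 0)
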